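/- arXiv:0903.3594 — 3 statements merged into one kernel-verified Lean document; each statement's English description precedes it below -/
import Mathlib

section
/- For any countable collection of functions f₁, f₂, … in F ⊆ L^α_+(S,μ), and any aᵢ, bⱼ ≥ 0, c > 0, the set { (⋁ᵢ aᵢ fᵢ)/(⋁ⱼ bⱼ gⱼ) ≤ c } equals ⋂ᵢ ⋂ₙ ⋃ⱼ { aᵢ fᵢ / (bⱼ gⱼ) < c + 1/n }, where fᵢ, gⱼ ∈ F. Consequently the ratio σ-field of the max-linear span of F is contained in the ratio σ-field of F. -/
open MeasureTheory
open scoped ENNReal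

/-- The ratio σ-field `ρ(F)` generated by the ratios `f₁/f₂`, `f₁, f₂ ∈ F`,
with ratios valued in `[0,∞]` (conventions `0/0 = 0`, `c/0 = ∞` for `c > 0`). -/
noncomputable def ratioSigma {S : Type*} (F : Set (S → ℝ)) : MeasurableSpace S :=
  ⨆ f ∈ F, ⨆ g ∈ F,
    MeasurableSpace.comap (fun x => ENNReal.ofReal (f x) / ENNReal.ofReal (g x))
      inferInstance

/-- Finite max-linear combinations `⋁ᵢ aᵢ fᵢ` with `aᵢ > 0`, `fᵢ ∈ F`. -/
def maxSpan {S : Type*} (F : Set (S → ℝ)) : Set (S → ℝ) :=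
  {g | ∃ (n : ℕ) (a : Fin (n + 1) → ℝ) (f : Fin (n + 1) → S → ℝ),
    (∀ i, 0 < a i) ∧ (∀ i, f i ∈ F) ∧ g = fun x => ⨆ i, a i * f i x}

/-- Dividing a finite element by a supremum gives the infimum of the quotients. -/
lemma aux_div_iSup {κ : Type*} [Nonempty κ] (a : ℝ≥0∞) (ha : a ≠ ⊤) (β : κ → ℝ≥0∞) :
    a / (⨆ j, β j) = ⨅ j, a / β j := by
  simp only [div_eq_mul_inv, ENNReal.inv_iSup]
  exact ENNReal.mul_iInf' (fun h => absurd h ha) (fun _ => inferInstance)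

/-- `ofReal` commutes with suprema over finite nonempty index types. -/
lemma aux_ofReal_iSup {n : ℕ} (u : Fin (n + 1) → ℝ) :
    ENNReal.ofReal (⨆ i, u i) = ⨆ i, ENNReal.ofReal (u i) := by
  obtain ⟨i₀, hi₀⟩ := Finite.exists_max u
  apply le_antisymm
  · exact le_trans (ENNReal.ofReal_le_ofReal (ciSup_le hi₀)) (le_iSup (fun i => ENNReal.ofReal (u i)) i₀)
  · exact iSup_le fun i => ENNReal.ofReal_le_ofReal
      (le_ciSup (Set.Finite.bddAbove (Set.finite_range u)) i)

/-- The key pointwise equivalence. -/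
lemma aux_key {ι κ : Type*} [Nonempty κ] (α : ι → ℝ≥0∞) (hα : ∀ i, α i ≠ ⊤)
    (β : κ → ℝ≥0∞) (c : ℝ) (hc : 0 < c) :
    (⨆ i, α i) / (⨆ j, β j) ≤ ENNReal.ofReal c ↔
      ∀ i, ∀ n : ℕ, ∃ j, α i / β j < ENNReal.ofReal (c + 1 / (n + 1)) := by
  rw [ENNReal.iSup_div, iSup_le_iff]
  refine forall_congr' fun i => ?_
  rw [aux_div_iSup (α i) (hα i) β]
  constructor
  · intro h n
    rw [← iInf_lt_iff]
    refine lt_of_le_of_lt h ?_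
    rw [ENNReal.ofReal_add hc.le (by positivity)]
    exact ENNReal.lt_add_right ENNReal.ofReal_ne_top
      (by simp [ENNReal.ofReal_eq_zero]; positivity)
  · intro h
    refine ENNReal.le_of_forall_pos_le_add fun ε hε _ => ?_
    obtain ⟨n, hn⟩ := exists_nat_one_div_lt (show (0:ℝ) < ε from hε)
    obtain ⟨j, hj⟩ := h n
    refine le_trans (iInf_le _ j) (le_trans hj.le ?_)
    rw [ENNReal.ofReal_add hc.le (by positivity)]
    gcongr
    rw [← ENNReal.ofReal_coe_nnreal]
    exact ENNReal.ofReal_le_ofReal (by push_cast; exact hn.le)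

/-- The level sets of ratios of countable max-linear combinations decompose as stated,
and consequently the ratio σ-field of the max-linear span of `F` is contained in the
ratio σ-field of `F`. -/
theorem ratio_maxCombination_set_identity {S : Type*} [MeasurableSpace S] (μ : Measure S)
    (F : Set (S → ℝ)) (hFpos : ∀ f ∈ F, ∀ x, 0 ≤ f x) :
    (∀ (f g : ℕ → S → ℝ), (∀ i, f i ∈ F) → (∀ j, g j ∈ F) →
      ∀ (a b : ℕ → ℝ), (∀ i, 0 ≤ a i) → (∀ j, 0 ≤ b j) → ∀ c : ℝ, 0 < c →
      {x : S | (⨆ i, ENNReal.ofReal (a i * f i x)) /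
          (⨆ j, ENNReal.ofReal (b j * g j x)) ≤ ENNReal.ofReal c} =
        ⋂ i : ℕ, ⋂ n : ℕ, ⋃ j : ℕ,
          {x : S | ENNReal.ofReal (a i * f i x) / ENNReal.ofReal (b j * g j x) <
            ENNReal.ofReal (c + 1 / (n + 1))}) ∧
    ratioSigma (maxSpan F) ≤ ratioSigma F := by
  constructor
  · intro f g hf hg a b ha hb c hc
    ext x
    simp only [Set.mem_setOf_eq, Set.mem_iInter, Set.mem_iUnion]
    exact aux_key (fun i => ENNReal.ofReal (a i * f i x)) (fun i => ENNReal.ofReal_ne_top)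
      (fun j => ENNReal.ofReal (b j * g j x)) c hc
  · refine iSup₂_le fun f hf => iSup₂_le fun g hg => ?_
    rw [← measurable_iff_comap_le]
    obtain ⟨n, a, φ, hapos, hφ, rfl⟩ := hf
    obtain ⟨m, b, ψ, hbpos, hψ, rfl⟩ := hg
    have key : (fun x => ENNReal.ofReal (⨆ i, a i * φ i x) /
        ENNReal.ofReal (⨆ j, b j * ψ j x)) =
        fun x => ⨆ i, ⨅ j, (ENNReal.ofReal (a i) / ENNReal.ofReal (b j)) *
          (ENNReal.ofReal (φ i x) / ENNReal.ofReal (ψ j x)) := by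
      funext x
      rw [aux_ofReal_iSup, aux_ofReal_iSup, ENNReal.iSup_div]
      refine iSup_congr fun i => ?_
      rw [aux_div_iSup _ ENNReal.ofReal_ne_top]
      refine iInf_congr fun j => ?_
      rw [ENNReal.ofReal_mul (hapos i).le, ENNReal.ofReal_mul (hbpos j).le,
        div_eq_mul_inv, div_eq_mul_inv, div_eq_mul_inv,
        ENNReal.mul_inv (Or.inl (by simp [ENNReal.ofReal_eq_zero]; exact (hbpos j)))
          (Or.inl ENNReal.ofReal_ne_top)]
      ring
    rw [key]
    refine Measurable.iSup fun i => Measurable.iInf fun j => Measurable.const_mul ?_ _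
    have h1 : MeasurableSpace.comap
        (fun x => ENNReal.ofReal (φ i x) / ENNReal.ofReal (ψ j x)) inferInstance ≤
        ⨆ g ∈ F, MeasurableSpace.comap
          (fun x => ENNReal.ofReal (φ i x) / ENNReal.ofReal (g x)) inferInstance :=
      le_iSup₂ (f := fun g (_ : g ∈ F) => MeasurableSpace.comap
        (fun x => ENNReal.ofReal (φ i x) / ENNReal.ofReal (g x)) inferInstance) (ψ j) (hψ j)
    have h2 : (⨆ g ∈ F, MeasurableSpace.comap
          (fun x => ENNReal.ofReal (φ i x) / ENNReal.ofReal (g x)) inferInstance) ≤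
        ratioSigma F :=
      le_iSup₂ (f := fun f (_ : f ∈ F) => ⨆ g ∈ F, MeasurableSpace.comap
        (fun x => ENNReal.ofReal (f x) / ENNReal.ofReal (g x)) inferInstance) (φ i) (hφ i)
    exact measurable_iff_comap_le.mpr (h1.trans h2)
end

section
/- Let ℱ be a max-linear subspace of L^α_+(S,μ) where μ is σ-finite. Then there exists a function f₀ ∈ ℱ of full support in ℱ, i.e., μ(supp(g) \ supp(f₀)) = 0 for all g ∈ ℱ. -/
open MeasureTheory Filter

/-- Any nonempty max-linear subspace `ℱ` of `L^α_+(S,μ)` with `μ` σ-finite contains a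
function `f₀` of full support in `ℱ`: `μ(supp g \ supp f₀) = 0` for all `g ∈ ℱ`. -/
theorem exists_full_support_of_sigmaFinite {S : Type*} [MeasurableSpace S]
    (μ : Measure S) [SigmaFinite μ] (α : ℝ) (hα : 0 < α)
    (ℱ : Set (S → ℝ)) (hne : ℱ.Nonempty)
    (hmem : ∀ f ∈ ℱ, Measurable f ∧ (∀ x, 0 ≤ f x) ∧
      ∫⁻ x, ENNReal.ofReal (f x ^ α) ∂μ < ⊤)
    (hmax : ∀ a b : ℝ, 0 < a → 0 < b → ∀ f ∈ ℱ, ∀ g ∈ ℱ,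
      (fun x => max (a * f x) (b * g x)) ∈ ℱ)
    (hclosed : ∀ g : S → ℝ, Measurable g → (∀ x, 0 ≤ g x) →
      (∃ h : ℕ → S → ℝ, (∀ n, h n ∈ ℱ) ∧
        Tendsto (fun n => ∫⁻ x, ENNReal.ofReal |h n x ^ α - g x ^ α| ∂μ) atTop (nhds 0)) →
      g ∈ ℱ) :
    ∃ f₀ ∈ ℱ, ∀ g ∈ ℱ, μ ({x | g x ≠ 0} \ {x | f₀ x ≠ 0}) = 0 := by
  classical
  obtain ⟨ν, hνfin, hμν, hνμ⟩ := exists_isFiniteMeasure_absolutelyContinuous μ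
  set A : (S → ℝ) → ENNReal := fun f => ν {x | f x ≠ 0} with hA
  set T : Set ENNReal := A '' ℱ with hT
  have hTne : T.Nonempty := hne.image A
  obtain ⟨u, hu_mono, hu_tendsto, hu_mem⟩ :=
    exists_seq_tendsto_sSup hTne (OrderTop.bddAbove T)
  choose f hfℱ hfA using fun n => hu_mem n
  have hf_meas : ∀ n, Measurable (f n) := fun n => (hmem _ (hfℱ n)).1
  have hf_nn : ∀ n x, 0 ≤ f n x := fun n => (hmem _ (hfℱ n)).2.1
  set I : ℕ → ENNReal := fun n => ∫⁻ x, ENNReal.ofReal (f n x ^ α) ∂μ with hI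
  have hf_int : ∀ n, I n < ⊤ := fun n => (hmem _ (hfℱ n)).2.2
  -- the scaling constants
  set t : ℕ → ENNReal := fun n => (2 : ENNReal)⁻¹ ^ n / (I n + 1) with ht
  have ht_ne_top : ∀ n, t n ≠ ⊤ := fun n =>
    (ENNReal.div_lt_top (ENNReal.pow_ne_top (by simp)) (by simp)).ne
  have ht_pos : ∀ n, 0 < t n := fun n =>
    ENNReal.div_pos_iff.2 ⟨pow_ne_zero _ (by simp),
      ENNReal.add_ne_top.2 ⟨(hf_int n).ne, by simp⟩⟩
  set c : ℕ → ℝ := fun n => (t n).toReal ^ α⁻¹ with hc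
  have hc_pos : ∀ n, 0 < c n := fun n =>
    Real.rpow_pos_of_pos (ENNReal.toReal_pos (ht_pos n).ne' (ht_ne_top n)) _
  have hc_pow : ∀ n, ENNReal.ofReal (c n ^ α) = t n := by
    intro n
    have : c n ^ α = (t n).toReal := by
      rw [hc]
      simp only
      rw [← Real.rpow_mul ENNReal.toReal_nonneg, inv_mul_cancel₀ hα.ne', Real.rpow_one]
    rw [this, ENNReal.ofReal_toReal (ht_ne_top n)]
  set F : ℕ → S → ℝ := fun n x => c n * f n x with hF
  have hF_mem : ∀ n, F n ∈ ℱ := by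
    intro n
    have := hmax (c n) (c n) (hc_pos n) (hc_pos n) (f n) (hfℱ n) (f n) (hfℱ n)
    simpa [max_self] using this
  have hF_nn : ∀ n x, 0 ≤ F n x := fun n x => mul_nonneg (hc_pos n).le (hf_nn n x)
  set H : ℕ → S → ENNReal := fun n x => ENNReal.ofReal (F n x ^ α) with hH
  have hH_meas : ∀ n, Measurable (H n) := fun n =>
    (((hf_meas n).const_mul _).pow_const α).ennreal_ofReal
  have hH_int : ∀ n, ∫⁻ x, H n x ∂μ ≤ (2 : ENNReal)⁻¹ ^ n := by
    intro n
    have heq : ∀ x, H n x = t n * ENNReal.ofReal (f n x ^ α) := by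
      intro x
      rw [hH]
      simp only
      rw [hF]
      simp only
      rw [Real.mul_rpow (hc_pos n).le (hf_nn n x),
        ENNReal.ofReal_mul (Real.rpow_nonneg (hc_pos n).le _), hc_pow n]
    calc ∫⁻ x, H n x ∂μ = ∫⁻ x, t n * ENNReal.ofReal (f n x ^ α) ∂μ := by
          simp_rw [heq]
      _ = t n * I n := lintegral_const_mul _ ((hf_meas n).pow_const α).ennreal_ofReal
      _ ≤ t n * (I n + 1) := by gcongr; exact le_self_add
      _ = (2 : ENNReal)⁻¹ ^ n := by
          rw [ht]
          exact ENNReal.div_mul_cancel (by simp) (ENNReal.add_ne_top.2 ⟨(hf_int n).ne, by simp⟩)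
  set G : S → ENNReal := fun x => ⨆ n, H n x with hG
  have hG_meas : Measurable G := Measurable.iSup hH_meas
  have hG_fin : ∫⁻ x, G x ∂μ ≠ ⊤ := by
    have h1 : ∫⁻ x, G x ∂μ ≤ ∑' n, ∫⁻ x, H n x ∂μ := by
      calc ∫⁻ x, G x ∂μ ≤ ∫⁻ x, ∑' n, H n x ∂μ :=
            lintegral_mono fun x => iSup_le fun n => ENNReal.le_tsum n
        _ = ∑' n, ∫⁻ x, H n x ∂μ := lintegral_tsum fun n => (hH_meas n).aemeasurable
    have h2 : ∑' n, ∫⁻ x, H n x ∂μ ≤ ∑' n, (2 : ENNReal)⁻¹ ^ n :=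
      ENNReal.tsum_le_tsum hH_int
    have h3 : ∑' n, (2 : ENNReal)⁻¹ ^ n ≠ ⊤ := by
      rw [ENNReal.tsum_geometric]
      refine ENNReal.inv_ne_top.2 ?_
      rw [Ne, tsub_eq_zero_iff_le]
      exact not_le.2 (ENNReal.inv_lt_one.2 (by norm_num))
    exact ((h1.trans h2).trans_lt (lt_top_iff_ne_top.2 h3)).ne
  have hG_ae : ∀ᵐ x ∂μ, G x < ⊤ := ae_lt_top hG_meas hG_fin
  set g : S → ℝ := fun x => (G x).toReal ^ α⁻¹ with hg
  have hg_meas : Measurable g := (hG_meas.ennreal_toReal).pow_const _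
  have hg_nn : ∀ x, 0 ≤ g x := fun x => Real.rpow_nonneg ENNReal.toReal_nonneg _
  have hg_pow : ∀ x, g x ^ α = (G x).toReal := by
    intro x
    rw [hg]
    simp only
    rw [← Real.rpow_mul ENNReal.toReal_nonneg, inv_mul_cancel₀ hα.ne', Real.rpow_one]
  -- the approximating sequence of running maxima
  have hrec : ∀ n : ℕ, ∃ hn : S → ℝ, hn ∈ ℱ ∧ (∀ x, 0 ≤ hn x) ∧
      ∀ x, ENNReal.ofReal (hn x ^ α) = (Finset.range (n + 1)).sup fun k => H k x := by
    intro n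
    induction n with
    | zero =>
      refine ⟨F 0, hF_mem 0, hF_nn 0, fun x => ?_⟩
      simp [hH]
    | succ n ih =>
      obtain ⟨hn, hnℱ, hn_nn, hn_pow⟩ := ih
      refine ⟨fun x => max (hn x) (F (n + 1) x), ?_, fun x => le_max_of_le_left (hn_nn x),
        fun x => ?_⟩
      · have := hmax 1 1 one_pos one_pos hn hnℱ (F (n + 1)) (hF_mem (n + 1))
        simpa using this
      · have : ENNReal.ofReal (max (hn x) (F (n + 1) x) ^ α)
            = max (ENNReal.ofReal (hn x ^ α)) (ENNReal.ofReal (F (n + 1) x ^ α)) := by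
          rcases le_total (hn x) (F (n + 1) x) with h | h
          · rw [max_eq_right h, max_eq_right]
            exact ENNReal.ofReal_le_ofReal (Real.rpow_le_rpow (hn_nn x) h hα.le)
          · rw [max_eq_left h, max_eq_left]
            exact ENNReal.ofReal_le_ofReal (Real.rpow_le_rpow (hF_nn _ x) h hα.le)
        have hr : ((Finset.range (n + 1 + 1)).sup fun k => H k x)
            = max ((Finset.range (n + 1)).sup fun k => H k x) (H (n + 1) x) := by
          rw [Finset.range_add_one, Finset.sup_insert]
          exact max_comm _ _
        rw [this, hn_pow x, hr]
  choose h hhℱ hh_nn hh_pow using hrec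
  set Φ : ℕ → S → ENNReal := fun n x => ENNReal.ofReal (h n x ^ α) with hΦ
  have hΦ_meas : ∀ n, Measurable (Φ n) :=
    fun n => (((hmem _ (hhℱ n)).1).pow_const α).ennreal_ofReal
  have hΦ_mono : Monotone Φ := by
    intro m n hmn
    intro x
    show ENNReal.ofReal (h m x ^ α) ≤ ENNReal.ofReal (h n x ^ α)
    rw [hh_pow m x, hh_pow n x]
    exact Finset.sup_mono (Finset.range_subset_range.2 (Nat.succ_le_succ hmn))
  have hΦ_le_G : ∀ n x, Φ n x ≤ G x := by
    intro n x
    rw [hΦ]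
    simp only
    rw [hh_pow n x]
    exact Finset.sup_le fun k _ => le_iSup (fun k => H k x) k
  have hΦ_sup : ∀ x, (⨆ n, Φ n x) = G x := by
    intro x
    refine le_antisymm (iSup_le fun n => hΦ_le_G n x) (iSup_le fun k => ?_)
    refine le_iSup_of_le k ?_
    rw [hΦ]
    simp only
    rw [hh_pow k x]
    exact Finset.le_sup (f := fun k => H k x) (Finset.mem_range.2 (Nat.lt_succ_self k))
  have hΦ_int_fin : ∀ n, ∫⁻ x, Φ n x ∂μ ≠ ⊤ := by
    intro n
    exact ((lintegral_mono fun x => hΦ_le_G n x).trans_lt (lt_top_iff_ne_top.2 hG_fin)).ne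
  have hlim : Tendsto (fun n => ∫⁻ x, Φ n x ∂μ) atTop (nhds (∫⁻ x, G x ∂μ)) := by
    have : ∫⁻ x, G x ∂μ = ⨆ n, ∫⁻ x, Φ n x ∂μ := by
      rw [← lintegral_iSup hΦ_meas hΦ_mono]
      exact lintegral_congr fun x => (hΦ_sup x).symm
    rw [this]
    exact tendsto_atTop_iSup fun m n hmn => lintegral_mono fun x => hΦ_mono hmn x
  have hdist : ∀ n, ∫⁻ x, ENNReal.ofReal |h n x ^ α - g x ^ α| ∂μ
      = ∫⁻ x, G x ∂μ - ∫⁻ x, Φ n x ∂μ := by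
    intro n
    rw [← lintegral_sub (hΦ_meas n) (hΦ_int_fin n) (Eventually.of_forall fun x => hΦ_le_G n x)]
    refine lintegral_congr_ae ?_
    filter_upwards [hG_ae] with x hx
    have h3 : h n x ^ α = (Φ n x).toReal := by
      rw [hΦ]
      simp only
      rw [ENNReal.toReal_ofReal (Real.rpow_nonneg (hh_nn n x) α)]
    rw [hg_pow x, h3, abs_sub_comm,
      abs_of_nonneg (sub_nonneg.2 (ENNReal.toReal_mono hx.ne (hΦ_le_G n x))),
      ← ENNReal.toReal_sub_of_le (hΦ_le_G n x) hx.ne,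
      ENNReal.ofReal_toReal ((tsub_le_self.trans_lt hx).ne)]
  have hgℱ : g ∈ ℱ := by
    refine hclosed g hg_meas hg_nn ⟨h, hhℱ, ?_⟩
    have : Tendsto (fun n => ∫⁻ x, G x ∂μ - ∫⁻ x, Φ n x ∂μ) atTop (nhds 0) := by
      have := ENNReal.Tendsto.sub
        (tendsto_const_nhds : Tendsto (fun _ : ℕ => ∫⁻ x, G x ∂μ) atTop _)
        hlim (Or.inl hG_fin)
      simpa using this
    simpa [hdist] using this
  -- g has maximal support
  have hbad : μ {x | ¬ G x < ⊤} = 0 := ae_iff.1 hG_ae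
  have hsupp_f_sub : ∀ n, {x | f n x ≠ 0} ⊆ {x | g x ≠ 0} ∪ {x | ¬ G x < ⊤} := by
    intro n x hx
    by_cases hGx : G x < ⊤
    · left
      have h1 : 0 < f n x := lt_of_le_of_ne (hf_nn n x) (Ne.symm hx)
      have h2 : 0 < H n x := by
        rw [hH]
        simp only
        rw [ENNReal.ofReal_pos]
        exact Real.rpow_pos_of_pos (mul_pos (hc_pos n) h1) _
      have h4 : 0 < G x := h2.trans_le (le_iSup (fun n => H n x) n)
      have h5 : 0 < (G x).toReal := ENNReal.toReal_pos h4.ne' hGx.ne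
      exact (Real.rpow_pos_of_pos h5 _).ne'
    · right; exact hGx
  have hg_supp_ge : sSup T ≤ ν {x | g x ≠ 0} := by
    refine le_of_tendsto hu_tendsto (Eventually.of_forall fun n => ?_)
    calc u n = ν {x | f n x ≠ 0} := (hfA n).symm
      _ ≤ ν ({x | g x ≠ 0} ∪ {x | ¬ G x < ⊤}) := measure_mono (hsupp_f_sub n)
      _ ≤ ν {x | g x ≠ 0} + ν {x | ¬ G x < ⊤} := measure_union_le _ _
      _ = ν {x | g x ≠ 0} := by rw [hνμ hbad, add_zero]
  refine ⟨g, hgℱ, fun p hp => ?_⟩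
  have hmℱ : (fun x => max (p x) (g x)) ∈ ℱ := by
    have := hmax 1 1 one_pos one_pos p hp g hgℱ
    simpa using this
  have hp_nn := (hmem p hp).2.1
  have hsupp_eq : {x | max (p x) (g x) ≠ 0} = {x | p x ≠ 0} ∪ {x | g x ≠ 0} := by
    ext x
    simp only [Set.mem_setOf_eq, Set.mem_union]
    constructor
    · intro hx
      by_contra hcon
      push_neg at hcon
      exact hx (by rw [hcon.1, hcon.2, max_self])
    · intro hx
      rcases hx with hx | hx
      · exact fun hmx => hx (le_antisymm (hmx ▸ le_max_left _ _) (hp_nn x))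
      · exact fun hmx => hx (le_antisymm (hmx ▸ le_max_right _ _) (hg_nn x))
  have hunion_le : ν ({x | p x ≠ 0} ∪ {x | g x ≠ 0}) ≤ ν {x | g x ≠ 0} := by
    calc ν ({x | p x ≠ 0} ∪ {x | g x ≠ 0}) = A (fun x => max (p x) (g x)) := by
          rw [hA]; simp only; rw [hsupp_eq]
      _ ≤ sSup T := le_csSup (OrderTop.bddAbove T) ⟨_, hmℱ, rfl⟩
      _ ≤ ν {x | g x ≠ 0} := hg_supp_ge
  have hg_supp_meas : NullMeasurableSet {x | g x ≠ 0} ν := by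
    refine (MeasurableSet.nullMeasurableSet ?_)
    have : {x | g x ≠ 0} = {x | g x = 0}ᶜ := rfl
    rw [this]
    exact (hg_meas (measurableSet_singleton 0)).compl
  have hν_diff : ν ({x | p x ≠ 0} \ {x | g x ≠ 0}) = 0 := by
    have hdiff_eq : {x | p x ≠ 0} \ {x | g x ≠ 0}
        = ({x | p x ≠ 0} ∪ {x | g x ≠ 0}) \ {x | g x ≠ 0} := by
      rw [Set.union_diff_right]
    rw [hdiff_eq, measure_diff Set.subset_union_right hg_supp_meas (measure_ne_top ν _)]
    exact le_antisymm (tsub_le_iff_right.2 (by simpa using hunion_le)) zero_le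
  exact hμν hν_diff
end

section
/- Let F ⊆ L^α_+(S,μ) and suppose f₀ ∈ F has full support with supp(f₀) = S (mod μ). If the ratio σ-field ρ(F) is equivalent mod μ to the Borel σ-field ℬ_S, then the extended positive ratio space ℛ_{e,+}(F) = { r·f : r ≥ 0 ρ(F)-measurable, f ∈ F } ∩ L^α_+(S,μ) equals all of L^α_+(S,μ). -/
open MeasureTheory

/-- If `f₀ ∈ F` has full support with `supp f₀ = S` (mod `μ`) and `ρ(F) ∼ ℬ_S mod μ`,
then the extended positive ratio space `ℛ_{e,+}(F)` is all of `L^α_+(S,μ)`: every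
`g ∈ L^α_+(S,μ)` is (a.e.) of the form `r·f` with `r ≥ 0` `ρ(F)`-measurable, `f ∈ F`. -/
theorem extended_ratio_space_eq_Lalpha {S : Type*} [MeasurableSpace S] (μ : Measure S)
    (α : ℝ) (hα : 0 < α) (F : Set (S → ℝ))
    (hmem : ∀ f ∈ F, Measurable f ∧ (∀ x, 0 ≤ f x) ∧
      ∫⁻ x, ENNReal.ofReal (f x ^ α) ∂μ < ⊤)
    (f₀ : S → ℝ) (hf₀ : f₀ ∈ F)
    (hfull : ∀ g ∈ F, μ ({x | g x ≠ 0} \ {x | f₀ x ≠ 0}) = 0)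
    (hsupp : μ {x | f₀ x = 0} = 0)
    (hequiv₁ : ∀ A : Set S, MeasurableSet[ratioSigma F] A →
      ∃ B : Set S, MeasurableSet B ∧ μ (symmDiff A B) = 0)
    (hequiv₂ : ∀ B : Set S, MeasurableSet B →
      ∃ A : Set S, MeasurableSet[ratioSigma F] A ∧ μ (symmDiff A B) = 0) :
    ∀ g : S → ℝ, Measurable g → (∀ x, 0 ≤ g x) →
      (∫⁻ x, ENNReal.ofReal (g x ^ α) ∂μ < ⊤) →
      ∃ r : S → ℝ, @Measurable S ℝ (ratioSigma F) _ r ∧ (∀ x, 0 ≤ r x) ∧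
        ∃ f ∈ F, g =ᵐ[μ] fun x => r x * f x := by
  intro g hg hg0 _
  classical
  obtain ⟨hf₀m, hf₀0, -⟩ := hmem f₀ hf₀
  set r0 : S → ℝ := fun x => g x / f₀ x with hr0
  have hr0meas : Measurable r0 := hg.div hf₀m
  have hA : ∀ q : ℚ, MeasurableSet {x | r0 x < (q : ℝ)} := fun q =>
    hr0meas measurableSet_Iio
  choose C hCm hCnull using fun q : ℚ => hequiv₂ {x | r0 x < (q : ℝ)} (hA q)
  set r' : S → ENNReal := fun x =>
    ⨅ q : ℚ, (C q).piecewise (fun _ => ENNReal.ofReal q) (fun _ => ⊤) x with hr'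
  have hr'meas : @Measurable S ENNReal (ratioSigma F) _ r' := by
    apply Measurable.iInf
    intro q
    exact Measurable.piecewise (hCm q) measurable_const measurable_const
  refine ⟨fun x => (r' x).toReal, (ENNReal.measurable_toReal).comp hr'meas,
    fun x => ENNReal.toReal_nonneg, f₀, hf₀, ?_⟩
  have hE : μ ({x | f₀ x = 0} ∪ ⋃ q : ℚ, symmDiff (C q) {x | r0 x < (q : ℝ)}) = 0 := by
    refine measure_union_null hsupp ?_
    exact (measure_iUnion_null fun q => hCnull q)
  refine measure_mono_null ?_ hE
  intro x hx
  simp only [Set.mem_setOf_eq, Set.mem_compl_iff, Set.mem_union, Set.mem_iUnion] at hx ⊢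
  by_contra hxE
  push_neg at hxE
  obtain ⟨hf₀ne, hCq⟩ := hxE
  have hmemC : ∀ q : ℚ, x ∈ C q ↔ r0 x < (q : ℝ) := by
    intro q
    have := hCq q
    constructor
    · intro h1
      by_contra h2
      exact this (Or.inl ⟨h1, h2⟩)
    · intro h1
      by_contra h2
      exact this (Or.inr ⟨h1, h2⟩)
  have hr0nn : 0 ≤ r0 x := div_nonneg (hg0 x) (hf₀0 x)
  have hval : r' x = ENNReal.ofReal (r0 x) := by
    refine le_antisymm ?_ ?_
    · refine ENNReal.le_of_forall_pos_le_add ?_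
      intro ε hε _
      obtain ⟨q, hq1, hq2⟩ := exists_rat_btwn (lt_add_of_pos_right (r0 x) hε)
      have hxC : x ∈ C q := (hmemC q).2 hq1
      calc r' x ≤ (C q).piecewise (fun _ => ENNReal.ofReal q) (fun _ => ⊤) x :=
            iInf_le _ q
        _ = ENNReal.ofReal q := by simp [Set.piecewise, hxC]
        _ ≤ ENNReal.ofReal (r0 x + ε) := ENNReal.ofReal_le_ofReal hq2.le
        _ = ENNReal.ofReal (r0 x) + ENNReal.ofReal ε :=
            ENNReal.ofReal_add hr0nn ε.coe_nonneg
        _ = ENNReal.ofReal (r0 x) + ε := by simp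
    · refine le_iInf fun q => ?_
      by_cases hxq : x ∈ C q
      · have hlt : r0 x < (q : ℝ) := (hmemC q).1 hxq
        simp only [Set.piecewise, hxq, if_pos]
        exact ENNReal.ofReal_le_ofReal hlt.le
      · simp [Set.piecewise, hxq]
  apply hx
  rw [hval, ENNReal.toReal_ofReal hr0nn, hr0]
  field_simp
end
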